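/- Let ρ₁, ρ₂ be finite positive Borel measures on the circle Λ with ρ₁(Λ) ≤ ρ₂(Λ). Then the flux function J is right-continuous: for every v ∈ Λ, J(v+ε) → J(v) as ε ↓ 0. -/

import Mathlib

open MeasureTheory Set Filter Topology

noncomputable section

instance fact01 : Fact ((0:ℝ) < 1) := ⟨zero_lt_one⟩

/-- The circle `ℝ/ℤ`. -/
abbrev Circle' : Type := AddCircle (1:ℝ)

/-- The angular position of `w` in the arc starting at `u`, measured positively;
a real number in `[0,1)`. -/
noncomputable def theta (u w : Circle') : ℝ := ((AddCircle.equivIco 1 0) (w - u) : ℝ)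

/-- The closed arc `[u,v]` from `u` to `v` in the positive direction. -/
def arcCC (u v : Circle') : Set Circle' := {w | theta u w ≤ theta u v}

/-- The half-open arc `(u,v]`. -/
def arcOC (u v : Circle') : Set Circle' := {w | 0 < theta u w ∧ theta u w ≤ theta u v}

/-- The half-open arc `[u,v)`. -/
def arcCO (u v : Circle') : Set Circle' := {w | theta u w < theta u v}

/-- The open arc `(u,v)`. -/
def arcOO (u v : Circle') : Set Circle' := {w | 0 < theta u w ∧ theta u w < theta u v}

/-- The excess `E(u,v) = ρ₁([u,v]) - ρ₂([u,v])`. -/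
noncomputable def excess (ρ₁ ρ₂ : Measure Circle') (u v : Circle') : ℝ :=
  (ρ₁ (arcCC u v)).toReal - (ρ₂ (arcCC u v)).toReal

/-- The flux `J(v) = sup_u max (E(u,v)) 0`. -/
noncomputable def flux (ρ₁ ρ₂ : Measure Circle') (v : Circle') : ℝ :=
  ⨆ u : Circle', max (excess ρ₁ ρ₂ u v) 0

/-- The set `𝒥 = {v | ∃ u, E(u,v) > 0}`. -/
def Jset (ρ₁ ρ₂ : Measure Circle') : Set Circle' := {v | ∃ u : Circle', 0 < excess ρ₁ ρ₂ u v}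

/-! ### Auxiliary lemmas about `theta` -/

lemma theta_add (u : Circle') (x : ℝ) : theta u (u + (x : Circle')) = Int.fract x := by
  have h : (u + (x : Circle')) - u = (x : Circle') := by abel
  rw [theta, h]
  simpa using AddCircle.coe_equivIco_mk_apply (p := (1:ℝ)) x

lemma theta_mem (u w : Circle') : theta u w ∈ Ico (0:ℝ) 1 := by
  have := (AddCircle.equivIco 1 0 (w - u)).2
  simpa [theta] using this

lemma coe_theta (u w : Circle') : ((theta u w : ℝ) : Circle') = w - u :=
  (AddCircle.equivIco 1 0).symm_apply_apply (w - u)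

lemma add_theta (u w : Circle') : u + ((theta u w : ℝ) : Circle') = w := by
  rw [coe_theta]; abel

lemma circle_coe_sub (s t : ℝ) : ((s - t : ℝ) : Circle') = (s : Circle') - (t : Circle') := rfl

lemma theta_shift (v : Circle') (t s : ℝ) :
    theta (v + (t:Circle')) (v + (s:Circle')) = Int.fract (s - t) := by
  have h : v + (s : Circle') = (v + (t:Circle')) + (((s - t : ℝ)) : Circle') := by
    rw [circle_coe_sub]; abel
  rw [h, theta_add]

lemma theta_sub (v u w : Circle') : theta u w = Int.fract (theta v w - theta v u) := by
  conv_lhs => rw [← add_theta v u, ← add_theta v w]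
  rw [theta_shift]

lemma theta_self (v : Circle') : theta v v = 0 := by
  have h : v = v + ((0:ℝ) : Circle') := by norm_num
  nth_rewrite 2 [h]
  rw [theta_add, Int.fract_zero]

lemma theta_eps (v : Circle') {ε : ℝ} (hε : ε ∈ Ico (0:ℝ) 1) :
    theta v (v + (ε : Circle')) = ε := by
  rw [theta_add, Int.fract_eq_self.2 ⟨hε.1, hε.2⟩]

lemma measurable_theta (u : Circle') : Measurable (theta u) := by
  have h : theta u = fun w => ((AddCircle.measurableEquivIco (T := (1:ℝ)) 0 (w - u)) : ℝ) := rfl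
  rw [h]
  exact measurable_subtype_coe.comp
    ((AddCircle.measurableEquivIco (T := (1:ℝ)) 0).measurable.comp (measurable_id.sub_const u))

lemma measurableSet_arcCC (u v : Circle') : MeasurableSet (arcCC u v) :=
  (measurable_theta u) measurableSet_Iic

lemma measurableSet_arcOC (u v : Circle') : MeasurableSet (arcOC u v) :=
  (measurable_theta u) measurableSet_Ioc

lemma measurableSet_arcOO (u v : Circle') : MeasurableSet (arcOO u v) :=
  (measurable_theta u) measurableSet_Ioo

/-! ### Real arithmetic helpers -/

lemma fract_sub {a b : ℝ} (ha : a ∈ Ico (0:ℝ) 1) (hb : b ∈ Ico (0:ℝ) 1) :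
    Int.fract (b - a) = if a ≤ b then b - a else b - a + 1 := by
  split_ifs with h
  · exact Int.fract_eq_self.2 ⟨by linarith, by linarith [ha.1, hb.2]⟩
  · push_neg at h
    have h1 : Int.fract (b - a) = Int.fract (b - a + 1) := by
      have h2 := Int.fract_add_intCast (b - a) 1
      push_cast at h2
      rw [h2]
    rw [h1, Int.fract_eq_self.2 ⟨by linarith [ha.2, hb.1], by linarith [ha.1, hb.2]⟩]

lemma real_split {t s ε : ℝ} (ht0 : 0 ≤ t) (ht1 : t < 1) (hs0 : 0 ≤ s) (hs1 : s < 1)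
    (he0 : 0 < ε) (he1 : ε < 1) (hu : t = 0 ∨ ε < t) :
    (((if t ≤ s then s - t else s - t + 1) ≤ if t ≤ ε then ε - t else ε - t + 1) ↔
      ((if t ≤ s then s - t else s - t + 1) ≤ (if t ≤ 0 then 0 - t else 0 - t + 1)) ∨
        (0 < s ∧ s ≤ ε))
    ∧ ¬(((if t ≤ s then s - t else s - t + 1) ≤ (if t ≤ 0 then 0 - t else 0 - t + 1)) ∧
        (0 < s ∧ s ≤ ε)) := by
  rcases hu with h0 | h0 <;> split_ifs with h1 h2 h3 <;>
    refine ⟨⟨fun h => ?_, fun h => ?_⟩, fun h => ?_⟩ <;>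
    first
      | (rcases h with h | ⟨ha, hb⟩ <;> linarith)
      | (obtain ⟨hx, hy, hz⟩ := h; linarith)
      | (left; linarith)
      | (right; constructor <;> linarith)
      | (rcases le_or_gt s 0 with h' | h'
         · left; linarith
         · right; constructor <;> linarith)

lemma real_subset {t s ε : ℝ} (ht0 : 0 < t) (hs0 : 0 ≤ s) (hs1 : s < 1) (he1 : ε < 1)
    (hte : t ≤ ε)
    (h : (if t ≤ s then s - t else s - t + 1) ≤ if t ≤ ε then ε - t else ε - t + 1) :
    0 < s ∧ s ≤ ε := by
  rw [if_pos hte] at h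
  split_ifs at h <;> constructor <;> linarith

lemma real_compl {t s : ℝ} (ht0 : 0 < t) (ht1 : t < 1) (hs0 : 0 ≤ s) (hs1 : s < 1) :
    ((if t ≤ s then s - t else s - t + 1) ≤ (if t ≤ 0 then 0 - t else 0 - t + 1)) ↔
      ¬(0 < s ∧ s < t) := by
  rw [if_neg (by linarith : ¬ t ≤ 0)]
  constructor
  · intro h hc
    split_ifs at h <;> linarith [hc.1, hc.2]
  · intro h
    push_neg at h
    split_ifs with h1
    · linarith
    · rcases le_or_gt s 0 with h' | h'
      · linarith
      · exact absurd (h h') h1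

/-! ### Set identities -/

lemma mem_arcOC_iff (v w : Circle') {ε : ℝ} (hε : ε ∈ Ico (0:ℝ) 1) :
    w ∈ arcOC v (v + (ε : Circle')) ↔ 0 < theta v w ∧ theta v w ≤ ε := by
  rw [arcOC, mem_setOf_eq, theta_eps v hε]

lemma arc_split (v : Circle') {ε : ℝ} (hε : ε ∈ Ioo (0:ℝ) 1) {u : Circle'}
    (hu : u ∉ arcOC v (v + (ε:Circle'))) :
    arcCC u (v + (ε:Circle')) = arcCC u v ∪ arcOC v (v + (ε:Circle')) ∧
      Disjoint (arcCC u v) (arcOC v (v + (ε:Circle'))) := by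
  have hε' : ε ∈ Ico (0:ℝ) 1 := ⟨hε.1.le, hε.2⟩
  have htm := theta_mem v u
  rw [mem_arcOC_iff v u hε'] at hu
  push_neg at hu
  have hu' : theta v u = 0 ∨ ε < theta v u := by
    rcases eq_or_lt_of_le htm.1 with h | h
    · exact Or.inl h.symm
    · exact Or.inr (hu h)
  have key := fun w : Circle' =>
    real_split htm.1 htm.2 (theta_mem v w).1 (theta_mem v w).2 hε.1 hε.2 hu'
  constructor
  · ext w
    have hsm := theta_mem v w
    simp only [arcCC, mem_setOf_eq, mem_union, mem_arcOC_iff v w hε',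
      theta_sub v u w, theta_sub v u v, theta_sub v u (v + (ε:Circle')),
      theta_eps v hε', theta_self]
    rw [fract_sub htm hsm, fract_sub htm (show (0:ℝ) ∈ Ico (0:ℝ) 1 by norm_num),
      fract_sub htm hε']
    exact (key w).1
  · rw [Set.disjoint_left]
    intro w hw1 hw2
    rw [mem_arcOC_iff v w hε'] at hw2
    have hsm := theta_mem v w
    simp only [arcCC, mem_setOf_eq, theta_sub v u w, theta_sub v u v, theta_self] at hw1
    rw [fract_sub htm hsm, fract_sub htm (show (0:ℝ) ∈ Ico (0:ℝ) 1 by norm_num)] at hw1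
    exact (key w).2 ⟨hw1, hw2⟩

lemma arcCC_subset (v : Circle') {ε : ℝ} (hε : ε ∈ Ioo (0:ℝ) 1) {u : Circle'}
    (hu : u ∈ arcOC v (v + (ε:Circle'))) :
    arcCC u (v + (ε:Circle')) ⊆ arcOC v (v + (ε:Circle')) := by
  have hε' : ε ∈ Ico (0:ℝ) 1 := ⟨hε.1.le, hε.2⟩
  have htm := theta_mem v u
  rw [mem_arcOC_iff v u hε'] at hu
  intro w hw
  have hsm := theta_mem v w
  rw [mem_arcOC_iff v w hε']
  simp only [arcCC, mem_setOf_eq, theta_sub v u w, theta_sub v u (v + (ε:Circle')),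
    theta_eps v hε'] at hw
  rw [fract_sub htm hsm, fract_sub htm hε'] at hw
  exact real_subset hu.1 hsm.1 hsm.2 hε.2 hu.2 hw

lemma arcCC_eq_compl (v u : Circle') (h0 : 0 < theta v u) :
    arcCC u v = (arcOO v u)ᶜ := by
  have htm := theta_mem v u
  ext w
  have hsm := theta_mem v w
  simp only [arcCC, arcOO, mem_setOf_eq, mem_compl_iff, theta_sub v u w, theta_sub v u v,
    theta_self]
  rw [fract_sub htm hsm, fract_sub htm (show (0:ℝ) ∈ Ico (0:ℝ) 1 by norm_num)]
  exact real_compl h0 htm.2 hsm.1 hsm.2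

lemma arcOO_subset (v u : Circle') {ε : ℝ} (hε : ε ∈ Ico (0:ℝ) 1) (h : theta v u ≤ ε) :
    arcOO v u ⊆ arcOC v (v + (ε:Circle')) := by
  intro w hw
  rw [mem_arcOC_iff v w hε]
  exact ⟨hw.1, le_trans hw.2.le h⟩

/-! ### Flux lemmas -/

lemma excess_le (ρ₁ ρ₂ : Measure Circle') [IsFiniteMeasure ρ₁] (u v : Circle') :
    excess ρ₁ ρ₂ u v ≤ (ρ₁ univ).toReal := by
  have h1 : (ρ₁ (arcCC u v)).toReal ≤ (ρ₁ univ).toReal :=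
    ENNReal.toReal_mono (measure_ne_top _ _) (measure_mono (subset_univ _))
  have h2 : (0:ℝ) ≤ (ρ₂ (arcCC u v)).toReal := ENNReal.toReal_nonneg
  unfold excess
  linarith

lemma flux_bdd (ρ₁ ρ₂ : Measure Circle') [IsFiniteMeasure ρ₁] (v : Circle') :
    BddAbove (range fun u => max (excess ρ₁ ρ₂ u v) 0) := by
  refine ⟨max (ρ₁ univ).toReal 0, ?_⟩
  rintro x ⟨u, rfl⟩
  exact max_le_max (excess_le ρ₁ ρ₂ u v) le_rfl

lemma flux_nonneg (ρ₁ ρ₂ : Measure Circle') [IsFiniteMeasure ρ₁] (v : Circle') :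
    0 ≤ flux ρ₁ ρ₂ v :=
  le_trans (le_max_right (excess ρ₁ ρ₂ v v) 0) (le_ciSup (flux_bdd ρ₁ ρ₂ v) v)

lemma flux_ineqs (ρ₁ ρ₂ : Measure Circle') [IsFiniteMeasure ρ₁] [IsFiniteMeasure ρ₂]
    (hmass : ρ₁ Set.univ ≤ ρ₂ Set.univ) (v : Circle') {ε : ℝ} (hε : ε ∈ Ioo (0:ℝ) 1) :
    flux ρ₁ ρ₂ (v + (ε:Circle')) ≤ flux ρ₁ ρ₂ v +
        ((ρ₁ (arcOC v (v + (ε:Circle')))).toReal + (ρ₂ (arcOC v (v + (ε:Circle')))).toReal)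
    ∧ flux ρ₁ ρ₂ v ≤ flux ρ₁ ρ₂ (v + (ε:Circle')) +
        ((ρ₁ (arcOC v (v + (ε:Circle')))).toReal + (ρ₂ (arcOC v (v + (ε:Circle')))).toReal) := by
  have hε' : ε ∈ Ico (0:ℝ) 1 := ⟨hε.1.le, hε.2⟩
  set S := arcOC v (v + (ε:Circle')) with hS
  set dd := (ρ₁ S).toReal + (ρ₂ S).toReal with hdd
  have hdd0 : 0 ≤ dd := add_nonneg ENNReal.toReal_nonneg ENNReal.toReal_nonneg
  -- excess splitting for u ∉ S
  have hsplit : ∀ u : Circle', u ∉ S →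
      excess ρ₁ ρ₂ u (v + (ε:Circle')) = excess ρ₁ ρ₂ u v +
        ((ρ₁ S).toReal - (ρ₂ S).toReal) := by
    intro u hu
    obtain ⟨heq, hdisj⟩ := arc_split v hε hu
    unfold excess
    rw [heq, measure_union hdisj (measurableSet_arcOC v _),
      measure_union hdisj (measurableSet_arcOC v _),
      ENNReal.toReal_add (measure_ne_top _ _) (measure_ne_top _ _),
      ENNReal.toReal_add (measure_ne_top _ _) (measure_ne_top _ _)]
    ring
  constructor
  · -- flux (v+ε) ≤ flux v + dd
    refine Real.iSup_le (fun u => ?_) (by linarith [flux_nonneg ρ₁ ρ₂ v])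
    by_cases hu : u ∈ S
    · have h1 : excess ρ₁ ρ₂ u (v + (ε:Circle')) ≤ (ρ₁ S).toReal := by
        have hsub : arcCC u (v + (ε:Circle')) ⊆ S := arcCC_subset v hε hu
        have := ENNReal.toReal_mono (measure_ne_top ρ₁ S) (measure_mono hsub)
        unfold excess
        have h2 : (0:ℝ) ≤ (ρ₂ (arcCC u (v + (ε:Circle')))).toReal := ENNReal.toReal_nonneg
        linarith
      have : max (excess ρ₁ ρ₂ u (v + (ε:Circle'))) 0 ≤ dd := by
        refine max_le (le_trans h1 ?_) hdd0
        rw [hdd]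
        have h6 : (0:ℝ) ≤ (ρ₂ S).toReal := ENNReal.toReal_nonneg
        linarith
      linarith [flux_nonneg ρ₁ ρ₂ v]
    · have h1 := hsplit u hu
      have h2 : max (excess ρ₁ ρ₂ u (v + (ε:Circle'))) 0 ≤
          max (excess ρ₁ ρ₂ u v) 0 + dd := by
        rw [h1]
        refine max_le (add_le_add (le_max_left _ _) ?_) (by positivity)
        rw [hdd]
        have : (0:ℝ) ≤ (ρ₂ S).toReal := ENNReal.toReal_nonneg
        linarith
      calc max (excess ρ₁ ρ₂ u (v + (ε:Circle'))) 0
          ≤ max (excess ρ₁ ρ₂ u v) 0 + dd := h2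
        _ ≤ flux ρ₁ ρ₂ v + dd := by gcongr; exact le_ciSup (flux_bdd ρ₁ ρ₂ v) u
  · -- flux v ≤ flux (v+ε) + dd
    refine Real.iSup_le (fun u => ?_) (by linarith [flux_nonneg ρ₁ ρ₂ (v + (ε:Circle'))])
    by_cases hu : u ∈ S
    · -- u ∈ (v, v+ε] : excess u v ≤ ρ₂ S
      have hu' := hu
      rw [hS, mem_arcOC_iff v u hε'] at hu'
      have hcompl := arcCC_eq_compl v u hu'.1
      have h1 : (ρ₁ (arcCC u v)).toReal =
          (ρ₁ univ).toReal - (ρ₁ (arcOO v u)).toReal := by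
        rw [hcompl, measure_compl (measurableSet_arcOO v u) (measure_ne_top _ _),
          ENNReal.toReal_sub_of_le (measure_mono (subset_univ _)) (measure_ne_top _ _)]
      have h2 : (ρ₂ (arcCC u v)).toReal =
          (ρ₂ univ).toReal - (ρ₂ (arcOO v u)).toReal := by
        rw [hcompl, measure_compl (measurableSet_arcOO v u) (measure_ne_top _ _),
          ENNReal.toReal_sub_of_le (measure_mono (subset_univ _)) (measure_ne_top _ _)]
      have hm : (ρ₁ univ).toReal ≤ (ρ₂ univ).toReal :=
        ENNReal.toReal_mono (measure_ne_top _ _) hmass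
      have h3 : (ρ₂ (arcOO v u)).toReal ≤ (ρ₂ S).toReal :=
        ENNReal.toReal_mono (measure_ne_top _ _)
          (measure_mono (arcOO_subset v u hε' hu'.2))
      have h4 : (0:ℝ) ≤ (ρ₁ (arcOO v u)).toReal := ENNReal.toReal_nonneg
      have h5 : excess ρ₁ ρ₂ u v ≤ dd := by
        unfold excess
        rw [h1, h2, hdd]
        have : (0:ℝ) ≤ (ρ₁ S).toReal := ENNReal.toReal_nonneg
        linarith
      have : max (excess ρ₁ ρ₂ u v) 0 ≤ dd := max_le h5 hdd0
      linarith [flux_nonneg ρ₁ ρ₂ (v + (ε:Circle'))]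
    · have h1 := hsplit u hu
      have h2 : max (excess ρ₁ ρ₂ u v) 0 ≤
          max (excess ρ₁ ρ₂ u (v + (ε:Circle'))) 0 + dd := by
        have h3 : excess ρ₁ ρ₂ u v = excess ρ₁ ρ₂ u (v + (ε:Circle')) -
            ((ρ₁ S).toReal - (ρ₂ S).toReal) := by linarith
        rw [h3]
        refine max_le ?_ (by positivity)
        have h4 : (0:ℝ) ≤ (ρ₁ S).toReal := ENNReal.toReal_nonneg
        have h5 : (0:ℝ) ≤ (ρ₂ S).toReal := ENNReal.toReal_nonneg
        have := le_max_left (excess ρ₁ ρ₂ u (v + (ε:Circle'))) 0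
        rw [hdd]
        linarith
      calc max (excess ρ₁ ρ₂ u v) 0
          ≤ max (excess ρ₁ ρ₂ u (v + (ε:Circle'))) 0 + dd := h2
        _ ≤ flux ρ₁ ρ₂ (v + (ε:Circle')) + dd := by
            gcongr; exact le_ciSup (flux_bdd ρ₁ ρ₂ (v + (ε:Circle'))) u

/-! ### The tendsto statement -/

/-- the flux `J` is right-continuous: `J(v+ε) → J(v)` as `ε ↓ 0`. -/
theorem stmt4 (ρ₁ ρ₂ : Measure Circle') [IsFiniteMeasure ρ₁] [IsFiniteMeasure ρ₂]
    (hmass : ρ₁ Set.univ ≤ ρ₂ Set.univ) (v : Circle') :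
    Filter.Tendsto (fun ε : ℝ => flux ρ₁ ρ₂ (v + (ε : Circle')))
      (nhdsWithin 0 (Set.Ioi 0)) (nhds (flux ρ₁ ρ₂ v)) := by
  obtain ⟨d, hd⟩ : ∃ d : ℝ → ℝ, d = fun ε : ℝ =>
      (ρ₁ (arcOC v (v + ((ε:ℝ):Circle')))).toReal + (ρ₂ (arcOC v (v + ((ε:ℝ):Circle')))).toReal :=
    ⟨_, rfl⟩
  have hd0 : ∀ ε, 0 ≤ d ε := by
    intro ε
    simp only [hd]
    exact add_nonneg ENNReal.toReal_nonneg ENNReal.toReal_nonneg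
  have hmono : ∀ ε ε' : ℝ, 0 ≤ ε → ε ≤ ε' → ε' < 1 → d ε ≤ d ε' := by
    intro ε ε' h1 h2 h3
    simp only [hd]
    have hsub : arcOC v (v + (ε:Circle')) ⊆ arcOC v (v + (ε':Circle')) := by
      intro w hw
      rw [mem_arcOC_iff v w ⟨h1, lt_of_le_of_lt h2 h3⟩] at hw
      rw [mem_arcOC_iff v w ⟨le_trans h1 h2, h3⟩]
      exact ⟨hw.1, hw.2.trans h2⟩
    exact add_le_add (ENNReal.toReal_mono (measure_ne_top _ _) (measure_mono hsub))
      (ENNReal.toReal_mono (measure_ne_top _ _) (measure_mono hsub))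
  -- the sequence 1/(n+2)
  have hmemn : ∀ n : ℕ, (1 / ((n:ℝ) + 2)) ∈ Ico (0:ℝ) 1 := by
    intro n
    constructor
    · positivity
    · rw [div_lt_one (by positivity)]
      linarith [Nat.cast_nonneg (α := ℝ) n]
  have hTanti : Antitone (fun n : ℕ => arcOC v (v + ((1 / ((n:ℝ) + 2) : ℝ) : Circle'))) := by
    intro n m hnm w hw
    rw [mem_arcOC_iff v w (hmemn m)] at hw
    rw [mem_arcOC_iff v w (hmemn n)]
    refine ⟨hw.1, hw.2.trans ?_⟩
    apply one_div_le_one_div_of_le (by positivity)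
    have : (n:ℝ) ≤ (m:ℝ) := Nat.cast_le.2 hnm
    linarith
  have hTempty : (⋂ n : ℕ, arcOC v (v + ((1 / ((n:ℝ) + 2) : ℝ) : Circle'))) = ∅ := by
    ext w
    simp only [mem_iInter, mem_empty_iff_false, iff_false, not_forall]
    by_cases h0 : 0 < theta v w
    · obtain ⟨n, hn⟩ := exists_nat_one_div_lt h0
      refine ⟨n, ?_⟩
      rw [mem_arcOC_iff v w (hmemn n)]
      rintro ⟨-, h2⟩
      have : 1 / ((n:ℝ) + 2) ≤ 1 / ((n:ℝ) + 1) := by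
        apply one_div_le_one_div_of_le (by positivity)
        linarith
      linarith
    · refine ⟨0, ?_⟩
      rw [mem_arcOC_iff v w (hmemn 0)]
      rintro ⟨h1, -⟩
      exact h0 h1
  have hseq : ∀ (ρ : Measure Circle') [IsFiniteMeasure ρ],
      Tendsto (fun n : ℕ => (ρ (arcOC v (v + ((1 / ((n:ℝ) + 2) : ℝ) : Circle')))).toReal)
        atTop (𝓝 0) := by
    intro ρ _
    have h1 : Tendsto (fun n : ℕ => ρ (arcOC v (v + ((1 / ((n:ℝ) + 2) : ℝ) : Circle'))))
        atTop (𝓝 0) := by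
      have := tendsto_measure_iInter_atTop (μ := ρ)
        (fun n => (measurableSet_arcOC v _).nullMeasurableSet) hTanti
        ⟨0, measure_ne_top _ _⟩
      rwa [hTempty, measure_empty] at this
    have := (ENNReal.tendsto_toReal (by simp : (0:ENNReal) ≠ ⊤)).comp h1
    exact this
  have hdseq : Tendsto (fun n : ℕ => d (1 / ((n:ℝ) + 2))) atTop (𝓝 0) := by
    simp only [hd]
    have := (hseq ρ₁).add (hseq ρ₂)
    simpa using this
  have hdtend : Tendsto d (𝓝[>] (0:ℝ)) (𝓝 0) := by
    rw [tendsto_order]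
    constructor
    · intro a ha
      exact Filter.Eventually.of_forall (fun ε => lt_of_lt_of_le ha (hd0 ε))
    · intro a ha
      obtain ⟨N, hN⟩ := (hdseq.eventually (gt_mem_nhds ha)).exists
      have hmem : Ioc (0:ℝ) (1 / ((N:ℝ) + 2)) ∈ 𝓝[>] (0:ℝ) :=
        Ioc_mem_nhdsGT_of_mem ⟨le_refl 0, by positivity⟩
      filter_upwards [hmem] with ε hε
      have h1 : d ε ≤ d (1 / ((N:ℝ) + 2)) :=
        hmono ε _ hε.1.le hε.2 (hmemn N).2
      linarith
  have hIoo : Ioo (0:ℝ) 1 ∈ 𝓝[>] (0:ℝ) := Ioo_mem_nhdsGT_of_mem ⟨le_refl 0, one_pos⟩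
  refine tendsto_of_tendsto_of_tendsto_of_le_of_le'
    (g := fun ε : ℝ => flux ρ₁ ρ₂ v - d ε) (h := fun ε : ℝ => flux ρ₁ ρ₂ v + d ε)
    ?_ ?_ ?_ ?_
  · simpa using tendsto_const_nhds.sub hdtend
  · simpa using tendsto_const_nhds.add hdtend
  · filter_upwards [hIoo] with ε hε
    have := (flux_ineqs ρ₁ ρ₂ hmass v hε).2
    simp only [hd]
    linarith
  · filter_upwards [hIoo] with ε hε
    have := (flux_ineqs ρ₁ ρ₂ hmass v hε).1
    simp only [hd]
    linarith

end
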